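/- (Posterior stability) For P-almost every sequence x ∈ 𝒳^ℕ sampled from P, the limit lim_{t→∞} w(Q | x_{<t}) of the posterior weight exists for every Q ∈ ℳ. -/

import Mathlib

open MeasureTheory Filter
open scoped ENNReal NNReal

/-- The cylinder set of infinite sequences agreeing with `x` on the first `t` coordinates,
i.e. the set of sequences beginning with the prefix `x_{<t}`. -/
def cyl {X : Type*} (x : ℕ → X) (t : ℕ) : Set (ℕ → X) := {y | ∀ i < t, y i = x i}

/-- `Q(x_{<t})`: the `Q`-measure of the cylinder set of sequences beginning with `x_{<t}`,
as a real number. -/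
noncomputable def prefProb {X : Type*} [MeasurableSpace X]
    (Q : Measure (ℕ → X)) (x : ℕ → X) (t : ℕ) : ℝ :=
  (Q (cyl x t)).toReal

/-- The posterior weight `w(Q i | x_{<t}) = w(Q i)·(Q i)(x_{<t}) / ∑_{j} w(Q j)·(Q j)(x_{<t})`. -/
noncomputable def post {X ι : Type*} [MeasurableSpace X]
    (w : ι → ℝ) (Q : ι → Measure (ℕ → X)) (i : ι) (x : ℕ → X) (t : ℕ) : ℝ :=
  w i * prefProb (Q i) x t / ∑' j, w j * prefProb (Q j) x t

set_option linter.unusedSectionVars false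
namespace PostStab

variable {X : Type*} [Fintype X] [MeasurableSpace X] [MeasurableSingletonClass X]

/-- The prefix map. -/
def pref (n : ℕ) (x : ℕ → X) : Fin n → X := fun i => x i

/-- Cylinder with prefix `p`. -/
def Cyl {n : ℕ} (p : Fin n → X) : Set (ℕ → X) := pref n ⁻¹' {p}

lemma mem_Cyl {n : ℕ} {p : Fin n → X} {x : ℕ → X} : x ∈ Cyl p ↔ pref n x = p :=
  Iff.rfl

lemma cyl_eq (x : ℕ → X) (t : ℕ) : cyl x t = Cyl (pref t x) := by
  ext y
  simp only [cyl, Set.mem_setOf_eq, mem_Cyl, pref, funext_iff, Fin.forall_iff]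

lemma measurableSet_Cyl {n : ℕ} (p : Fin n → X) : MeasurableSet (Cyl p) := by
  have : Cyl p = ⋂ i : Fin n, (fun y : ℕ → X => y (i : ℕ)) ⁻¹' {p i} := by
    ext y; simp [mem_Cyl, funext_iff, pref]
  rw [this]
  exact MeasurableSet.iInter fun i =>
    (measurable_pi_apply (i : ℕ)) (measurableSet_singleton (p i))

lemma measurableSet_pref_preimage {n : ℕ} (A : Set (Fin n → X)) :
    MeasurableSet (pref n ⁻¹' A) := by
  have : pref n ⁻¹' A = ⋃ p ∈ A, Cyl p := by
    ext y; simp [mem_Cyl, Cyl]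
  rw [this]
  exact MeasurableSet.biUnion A.to_countable fun p _ => measurableSet_Cyl p

/-- The filtration of prefix σ-algebras. -/
def filt : Filtration ℕ (by infer_instance : MeasurableSpace (ℕ → X)) where
  seq := fun n => MeasurableSpace.comap (pref n) ⊤
  mono' := by
    intro n m h s hs
    obtain ⟨A, -, rfl⟩ := hs
    refine ⟨(fun q : Fin m → X => fun i : Fin n => q (Fin.castLE h i)) ⁻¹' A, trivial, ?_⟩
    rfl
  le' := by
    rintro n s ⟨A, -, rfl⟩
    exact measurableSet_pref_preimage A

lemma pairwise_disjoint_Cyl {n : ℕ} :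
    Pairwise (Function.onFun Disjoint fun p : Fin n → X => Cyl p) := by
  intro p q hpq
  simp only [Function.onFun, Set.disjoint_left]
  rintro x (hx : pref n x = p) (hx' : pref n x = q)
  exact hpq (hx ▸ hx')

lemma iUnion_Cyl {n : ℕ} : (⋃ p : Fin n → X, Cyl p) = Set.univ := by
  ext x; simp only [Set.mem_iUnion, Set.mem_univ, iff_true]
  exact ⟨pref n x, rfl⟩

lemma measure_univ_eq_sum (ν : Measure (ℕ → X)) (n : ℕ) :
    ν Set.univ = ∑ p : Fin n → X, ν (Cyl p) := by
  rw [← iUnion_Cyl (n := n), measure_iUnion pairwise_disjoint_Cyl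
    fun p => measurableSet_Cyl p, tsum_fintype]

lemma pref_succ (n : ℕ) (x : ℕ → X) :
    pref (n + 1) x = Fin.snoc (pref n x) (x n) := by
  funext i
  refine Fin.lastCases ?_ (fun j => ?_) i
  · simp [pref, Fin.snoc_last]
  · simp [pref, Fin.snoc_castSucc]

lemma Cyl_eq_iUnion_snoc {n : ℕ} (p : Fin n → X) :
    Cyl p = ⋃ a : X, Cyl (Fin.snoc p a) := by
  ext x
  simp only [Set.mem_iUnion, mem_Cyl]
  constructor
  · intro h
    exact ⟨x n, by rw [pref_succ, h]⟩
  · rintro ⟨a, ha⟩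
    have := congrArg (fun q : Fin (n+1) → X => fun i : Fin n => q i.castSucc) ha
    simp only [pref_succ] at this
    simpa [Fin.snoc_castSucc, funext_iff, pref] using this

lemma pairwise_disjoint_snoc {n : ℕ} (p : Fin n → X) :
    Pairwise (Function.onFun Disjoint fun a : X => Cyl (Fin.snoc p a)) := by
  intro a b hab
  simp only [Function.onFun, Set.disjoint_left]
  rintro x (hx : pref (n+1) x = _) (hx' : pref (n+1) x = _)
  apply hab
  have h1 := congrArg (fun q : Fin (n+1) → X => q (Fin.last n)) hx
  have h2 := congrArg (fun q : Fin (n+1) → X => q (Fin.last n)) hx'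
  simp only [Fin.snoc_last] at h1 h2
  rw [← h1, ← h2]

lemma measure_Cyl_succ (ν : Measure (ℕ → X)) {n : ℕ} (p : Fin n → X) :
    ν (Cyl p) = ∑ a : X, ν (Cyl (Fin.snoc p a)) := by
  rw [Cyl_eq_iUnion_snoc, measure_iUnion (pairwise_disjoint_snoc p)
    (fun a => measurableSet_Cyl _), tsum_fintype]

variable (ν : Measure (ℕ → X)) [IsFiniteMeasure ν]

lemma comp_pref_eq_sum {n : ℕ} (F : (Fin n → X) → ℝ) :
    (fun x => F (pref n x)) =
      fun x => ∑ p : Fin n → X, (Cyl p).indicator (fun _ => F p) x := by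
  funext x
  rw [Finset.sum_eq_single (pref n x)]
  · simp [Set.indicator_of_mem, mem_Cyl]
  · intro p _ hp
    exact Set.indicator_of_notMem (fun h => hp (mem_Cyl.mp h).symm) _
  · intro h; exact absurd (Finset.mem_univ _) h

lemma integrable_comp_pref {n : ℕ} (F : (Fin n → X) → ℝ) :
    Integrable (fun x => F (pref n x)) ν := by
  rw [comp_pref_eq_sum]
  exact integrable_finset_sum _ fun p _ =>
    (integrable_const (F p)).indicator (measurableSet_Cyl p)

lemma integral_comp_pref {n : ℕ} (F : (Fin n → X) → ℝ) :
    ∫ x, F (pref n x) ∂ν = ∑ p : Fin n → X, F p * (ν (Cyl p)).toReal := by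
  rw [comp_pref_eq_sum, integral_finset_sum _ fun p _ =>
    (integrable_const (F p)).indicator (measurableSet_Cyl p)]
  refine Finset.sum_congr rfl fun p _ => ?_
  rw [integral_indicator_const (F p) (measurableSet_Cyl p), smul_eq_mul, mul_comm]
  rfl

lemma setIntegral_comp_pref {n : ℕ} (F : (Fin n → X) → ℝ) (A : Set (Fin n → X)) :
    ∫ x in pref n ⁻¹' A, F (pref n x) ∂ν
      = ∑ p : Fin n → X, A.indicator F p * (ν (Cyl p)).toReal := by
  rw [← integral_indicator (measurableSet_pref_preimage A)]
  have : (pref n ⁻¹' A).indicator (fun x => F (pref n x))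
      = fun x => A.indicator F (pref n x) := by
    funext x
    by_cases hx : pref n x ∈ A
    · rw [Set.indicator_of_mem hx, Set.indicator_of_mem (show x ∈ pref n ⁻¹' A from hx)]
    · rw [Set.indicator_of_notMem hx, Set.indicator_of_notMem (show x ∉ pref n ⁻¹' A from hx)]
  rw [this, integral_comp_pref]


/-- restriction of a prefix -/
def res (n : ℕ) (q : Fin (n+1) → X) : Fin n → X := fun i => q i.castSucc

lemma res_snoc (n : ℕ) (p : Fin n → X) (a : X) : res n (Fin.snoc p a) = p := by
  funext i; simp [res, Fin.snoc_castSucc]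

def snocE (n : ℕ) : ((Fin n → X) × X) ≃ (Fin (n+1) → X) where
  toFun := fun pa => Fin.snoc pa.1 pa.2
  invFun := fun q => (res n q, q (Fin.last n))
  left_inv := fun pa => by simp [res_snoc, Fin.snoc_last]
  right_inv := fun q => by
    funext i
    refine Fin.lastCases ?_ (fun j => ?_) i
    · simp [Fin.snoc_last]
    · simp [Fin.snoc_castSucc, res]

/-- likelihood ratio on prefixes -/
noncomputable def lrF (μ P : Measure (ℕ → X)) (n : ℕ) (p : Fin n → X) : ℝ :=
  (μ (Cyl p)).toReal / (P (Cyl p)).toReal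

/-- likelihood ratio process -/
noncomputable def lr (μ P : Measure (ℕ → X)) (t : ℕ) (x : ℕ → X) : ℝ :=
  lrF μ P t (pref t x)

lemma lrF_nonneg (μ P : Measure (ℕ → X)) (n : ℕ) (p : Fin n → X) : 0 ≤ lrF μ P n p :=
  div_nonneg ENNReal.toReal_nonneg ENNReal.toReal_nonneg

lemma lrF_mul_le (μ P : Measure (ℕ → X)) [IsFiniteMeasure μ] {n : ℕ} (p : Fin n → X) :
    lrF μ P n p * (P (Cyl p)).toReal ≤ (μ (Cyl p)).toReal := by
  by_cases h : (P (Cyl p)).toReal = 0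
  · simp [lrF, h]
  · rw [lrF, div_mul_cancel₀ _ h]

variable (μ P : Measure (ℕ → X)) [IsFiniteMeasure μ] [IsProbabilityMeasure P]

lemma lr_supermartingale : Supermartingale (lr μ P) filt P := by
  refine supermartingale_of_setIntegral_succ_le ?_ (fun t => integrable_comp_pref P (lrF μ P t)) ?_
  · intro t
    refine Measurable.stronglyMeasurable ?_
    intro s _
    exact ⟨lrF μ P t ⁻¹' s, trivial, rfl⟩
  · rintro t s ⟨A, -, rfl⟩
    have hs' : pref t ⁻¹' A = pref (t+1) ⁻¹' (res t ⁻¹' A) := rfl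
    have hL : ∫ x in pref t ⁻¹' A, lr μ P (t+1) x ∂P
        = ∑ q : Fin (t+1) → X,
            (res t ⁻¹' A).indicator (lrF μ P (t+1)) q * (P (Cyl q)).toReal := by
      rw [hs']; exact setIntegral_comp_pref P _ _
    have hR : ∫ x in pref t ⁻¹' A, lr μ P t x ∂P
        = ∑ q : Fin (t+1) → X,
            (res t ⁻¹' A).indicator (fun q => lrF μ P t (res t q)) q * (P (Cyl q)).toReal := by
      rw [hs']; exact setIntegral_comp_pref P (fun q => lrF μ P t (res t q)) _
    rw [hL, hR]
    rw [← Fintype.sum_equiv (snocE t)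
      (fun pa : (Fin t → X) × X => (res t ⁻¹' A).indicator (lrF μ P (t+1)) (Fin.snoc pa.1 pa.2)
        * (P (Cyl (Fin.snoc pa.1 pa.2))).toReal) _ (fun pa => rfl)]
    rw [← Fintype.sum_equiv (snocE t)
      (fun pa : (Fin t → X) × X => (res t ⁻¹' A).indicator (fun q => lrF μ P t (res t q))
        (Fin.snoc pa.1 pa.2) * (P (Cyl (Fin.snoc pa.1 pa.2))).toReal) _ (fun pa => rfl)]
    rw [Fintype.sum_prod_type, Fintype.sum_prod_type]
    refine Finset.sum_le_sum fun p _ => ?_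
    by_cases hp : p ∈ A
    · have hmem : ∀ a : X, Fin.snoc p a ∈ res t ⁻¹' A := by
        intro a; simp [Set.mem_preimage, res_snoc, hp]
      simp only [Set.indicator_of_mem (hmem _), res_snoc]
      by_cases h0 : P (Cyl p) = 0
      · have hsub : ∀ a : X, Cyl (Fin.snoc p a) ⊆ Cyl p := by
          intro a
          rw [Cyl_eq_iUnion_snoc p]
          exact Set.subset_iUnion (fun b => Cyl (Fin.snoc p b)) a
        have hz : ∀ a : X, P (Cyl (Fin.snoc p a)) = 0 :=
          fun a => measure_mono_null (hsub a) h0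
        simp [hz, h0]
      · have hne : (P (Cyl p)).toReal ≠ 0 := by
          simp [ENNReal.toReal_eq_zero_iff, h0, measure_ne_top P _]
        calc ∑ a : X, lrF μ P (t+1) (Fin.snoc p a) * (P (Cyl (Fin.snoc p a))).toReal
            ≤ ∑ a : X, (μ (Cyl (Fin.snoc p a))).toReal :=
              Finset.sum_le_sum fun a _ => lrF_mul_le μ P _
          _ = (μ (Cyl p)).toReal := by
              rw [measure_Cyl_succ μ p, ENNReal.toReal_sum fun a _ => measure_ne_top μ _]
          _ = lrF μ P t p * (P (Cyl p)).toReal := by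
              rw [lrF, div_mul_cancel₀ _ hne]
          _ = ∑ a : X, lrF μ P t p * (P (Cyl (Fin.snoc p a))).toReal := by
              rw [← Finset.mul_sum, ← ENNReal.toReal_sum fun a _ => measure_ne_top P _,
                ← measure_Cyl_succ P p]
    · have hmem : ∀ a : X, Fin.snoc p a ∉ res t ⁻¹' A := by
        intro a; simp [Set.mem_preimage, res_snoc, hp]
      simp [Set.indicator_of_notMem (hmem _)]


lemma lr_integral_le (t : ℕ) : ∫ x, lr μ P t x ∂P ≤ (μ Set.univ).toReal := by
  have : ∫ x, lr μ P t x ∂P = ∑ p : Fin t → X, lrF μ P t p * (P (Cyl p)).toReal :=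
    integral_comp_pref P (lrF μ P t)
  rw [this]
  calc ∑ p : Fin t → X, lrF μ P t p * (P (Cyl p)).toReal
      ≤ ∑ p : Fin t → X, (μ (Cyl p)).toReal :=
        Finset.sum_le_sum fun p _ => lrF_mul_le μ P p
    _ = (μ Set.univ).toReal := by
        rw [measure_univ_eq_sum μ t, ENNReal.toReal_sum fun p _ => measure_ne_top μ _]

lemma lr_eLpNorm_le (t : ℕ) : eLpNorm (lr μ P t) 1 P ≤ (μ Set.univ).toNNReal := by
  rw [eLpNorm_one_eq_lintegral_enorm]
  have h1 : ∫⁻ x, ‖lr μ P t x‖ₑ ∂P = ENNReal.ofReal (∫ x, lr μ P t x ∂P) := by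
    unfold lr
    rw [ofReal_integral_eq_lintegral_ofReal (integrable_comp_pref P (lrF μ P t))
      (Eventually.of_forall fun x => lrF_nonneg μ P t (pref t x))]
    exact lintegral_congr fun x => Real.enorm_eq_ofReal (lrF_nonneg μ P t (pref t x))
  rw [h1]
  calc ENNReal.ofReal (∫ x, lr μ P t x ∂P)
      ≤ ENNReal.ofReal ((μ Set.univ).toReal) := ENNReal.ofReal_le_ofReal (lr_integral_le μ P t)
    _ = μ Set.univ := ENNReal.ofReal_toReal (measure_ne_top μ _)
    _ = ((μ Set.univ).toNNReal : ℝ≥0∞) := (ENNReal.coe_toNNReal (measure_ne_top μ _)).symm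

theorem lr_tendsto : ∀ᵐ x ∂P, ∃ L, Tendsto (fun t => lr μ P t x) atTop (nhds L) := by
  have h := (lr_supermartingale μ P).neg.exists_ae_tendsto_of_bdd
    (R := (μ Set.univ).toNNReal) (fun n => le_of_le_of_eq (le_of_eq (eLpNorm_neg _ _ _))
      (by rfl) |>.trans (lr_eLpNorm_le μ P n))
  filter_upwards [h] with x hx
  obtain ⟨c, hc⟩ := hx
  refine ⟨-c, ?_⟩
  have h2 := hc.neg
  simp only [Pi.neg_apply, neg_neg] at h2
  exact h2

theorem lr_tendsto_cyl : ∀ᵐ x ∂P, ∃ L,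
    Tendsto (fun t => (μ (cyl x t)).toReal / (P (cyl x t)).toReal) atTop (nhds L) := by
  filter_upwards [lr_tendsto μ P] with x hx
  obtain ⟨L, hL⟩ := hx
  refine ⟨L, ?_⟩
  have he : (fun t => (μ (cyl x t)).toReal / (P (cyl x t)).toReal) = fun t => lr μ P t x := by
    funext t; rw [cyl_eq x t]; rfl
  rw [he]
  exact hL

end PostStab


/-- **Posterior stability.** For `P`-almost every sequence sampled from the true measure
`P = Q i₀ ∈ ℳ`, the limit `lim_{t→∞} w(Q | x_{<t})` of the posterior weight exists for
every `Q ∈ ℳ`. -/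
theorem posterior_stability
    {X : Type*} [Fintype X] [Nonempty X] [MeasurableSpace X] [MeasurableSingletonClass X]
    {ι : Type*} [Countable ι]
    (Q : ι → Measure (ℕ → X)) (hQ : ∀ i, IsProbabilityMeasure (Q i))
    (w : ι → ℝ) (hw : ∀ i, 0 < w i) (hw1 : ∑' i, w i = 1)
    (i₀ : ι) :
    ∀ᵐ x ∂(Q i₀), ∀ i : ι, ∃ L : ℝ,
      Tendsto (fun t => post w Q i x t) atTop (nhds L) := by
  haveI := hQ i₀
  set P := Q i₀ with hP
  have hsum : Summable w := by
    by_contra h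
    rw [tsum_eq_zero_of_not_summable h] at hw1
    exact one_ne_zero hw1.symm
  set ξ : Measure (ℕ → X) := Measure.sum (fun i => (ENNReal.ofReal (w i)) • Q i) with hξdef
  have hξ_apply : ∀ s : Set (ℕ → X), MeasurableSet s →
      ξ s = ∑' i, ENNReal.ofReal (w i) * Q i s := by
    intro s hs
    rw [hξdef, Measure.sum_apply _ hs]
    exact tsum_congr fun i => by rw [Measure.smul_apply, smul_eq_mul]
  have hξ_univ : ξ Set.univ = 1 := by
    rw [hξ_apply _ MeasurableSet.univ]
    have : ∀ i, Q i Set.univ = 1 := fun i => (hQ i).measure_univ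
    simp only [this, mul_one]
    rw [← ENNReal.ofReal_tsum_of_nonneg (fun i => (hw i).le) hsum, hw1, ENNReal.ofReal_one]
  haveI : IsProbabilityMeasure ξ := ⟨hξ_univ⟩
  haveI : IsFiniteMeasure ξ := inferInstance
  have hcylm : ∀ (x : ℕ → X) (t : ℕ), MeasurableSet (cyl x t) := fun x t => by
    rw [PostStab.cyl_eq]; exact PostStab.measurableSet_Cyl _
  have hξ_ge : ∀ s : Set (ℕ → X), MeasurableSet s →
      ENNReal.ofReal (w i₀) * P s ≤ ξ s := by
    intro s hs
    rw [hξ_apply s hs]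
    exact ENNReal.le_tsum i₀
  have htsum : ∀ (x : ℕ → X) (t : ℕ),
      (∑' j, w j * prefProb (Q j) x t) = (ξ (cyl x t)).toReal := by
    intro x t
    rw [hξ_apply _ (hcylm x t), ENNReal.tsum_toReal_eq
      (fun i => ENNReal.mul_ne_top ENNReal.ofReal_ne_top (measure_ne_top (Q i) _))]
    refine (tsum_congr fun j => ?_).symm
    rw [ENNReal.toReal_mul, ENNReal.toReal_ofReal (hw j).le]
    rfl
  have hP0 : ∀ᵐ x ∂P, ∀ t : ℕ, P (cyl x t) ≠ 0 := by
    rw [ae_all_iff]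
    intro t
    rw [ae_iff]
    have hsub : {x : ℕ → X | ¬ P (cyl x t) ≠ 0} ⊆
        ⋃ p ∈ {p : Fin t → X | P (PostStab.Cyl p) = 0}, PostStab.Cyl p := by
      intro x hx
      simp only [Set.mem_setOf_eq, not_not] at hx
      have hmem : P (PostStab.Cyl (PostStab.pref t x)) = 0 := by
        rw [← PostStab.cyl_eq]; exact hx
      exact Set.mem_biUnion hmem rfl
    have hnull : P (⋃ p ∈ {p : Fin t → X | P (PostStab.Cyl p) = 0}, PostStab.Cyl p) = 0 :=
      (measure_biUnion_null_iff (Set.to_countable _)).mpr fun p hp => hp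
    exact measure_mono_null hsub hnull
  have hlrs : ∀ᵐ x ∂P, ∀ i, ∃ L, Tendsto
      (fun t => (Q i (cyl x t)).toReal / (P (cyl x t)).toReal) atTop (nhds L) := by
    rw [ae_all_iff]
    intro i
    haveI := hQ i
    exact PostStab.lr_tendsto_cyl (Q i) P
  have hlrξ := PostStab.lr_tendsto_cyl ξ P
  filter_upwards [hP0, hlrs, hlrξ] with x h0 h1 h2
  obtain ⟨D, hD⟩ := h2
  have hPpos : ∀ t, 0 < (P (cyl x t)).toReal := fun t =>
    ENNReal.toReal_pos (h0 t) (measure_ne_top P _)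
  have hξge : ∀ t, w i₀ * (P (cyl x t)).toReal ≤ (ξ (cyl x t)).toReal := by
    intro t
    have h' := ENNReal.toReal_mono (measure_ne_top ξ _) (hξ_ge _ (hcylm x t))
    rwa [ENNReal.toReal_mul, ENNReal.toReal_ofReal (hw i₀).le] at h'
  have hDge : ∀ t, w i₀ ≤ (ξ (cyl x t)).toReal / (P (cyl x t)).toReal := by
    intro t
    rw [le_div_iff₀ (hPpos t)]
    exact hξge t
  have hwD : w i₀ ≤ D := ge_of_tendsto' hD hDge
  intro i
  obtain ⟨Li, hLi⟩ := h1 i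
  have hD0 : D ≠ 0 := ne_of_gt (lt_of_lt_of_le (hw i₀) hwD)
  refine ⟨w i * Li / D, ?_⟩
  refine ((hLi.const_mul (w i)).div hD hD0).congr ?_
  intro t
  have hc : (P (cyl x t)).toReal ≠ 0 := ne_of_gt (hPpos t)
  have hb : (ξ (cyl x t)).toReal ≠ 0 :=
    ne_of_gt (lt_of_lt_of_le (mul_pos (hw i₀) (hPpos t)) (hξge t))
  have ht := htsum x t
  simp only [prefProb] at ht
  simp only [post, prefProb, Pi.div_apply]
  rw [ht]
  field_simp
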